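/- Let 𝔤 be a finite-dimensional real Lie algebra with trivial centre such that the ideal 𝔤^∞ := ⋂_{j≥1} 𝔤^j is abelian. Then the centralizer of 𝔤^∞ in 𝔤 equals 𝔤^∞, i.e. { x ∈ 𝔤 : [x, y] = 0 for all y ∈ 𝔤^∞ } = 𝔤^∞. -/

import Mathlib

open LieModule

section Setup

variable (L : Type*) [LieRing L] [LieAlgebra ℝ L]

/-- The ideal `𝔤^∞`. -/
def ginf : LieIdeal ℝ L :=
  ⨅ k, LieModule.lowerCentralSeries ℝ L L k

variable {L}

lemma lie_mem_ginf {x y : L} (hy : y ∈ ginf L) : ⁅x, y⁆ ∈ ginf L := by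
  rw [ginf, LieSubmodule.mem_iInf] at hy ⊢
  exact fun k => (LieModule.lowerCentralSeries ℝ L L k).lie_mem (hy k)

variable (L)

/-- The centralizer of `𝔤^∞`. -/
def cent : LieIdeal ℝ L where
  carrier := {x | ∀ y ∈ ginf L, ⁅x, y⁆ = 0}
  add_mem' := fun ha hb => fun y hy => by
    rw [add_lie, ha y hy, hb y hy, add_zero]
  zero_mem' := fun y hy => zero_lie y
  smul_mem' := fun c a ha => fun y hy => by rw [smul_lie, ha y hy, smul_zero]
  lie_mem := fun {x z} hz => fun y hy => by
    have h1 : ⁅z, y⁆ = 0 := hz y hy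
    have h2 : ⁅z, ⁅x, y⁆⁆ = 0 := hz _ (lie_mem_ginf hy)
    rw [lie_lie, h1, h2, lie_zero, sub_zero]

variable {L}

lemma mem_cent {x : L} : x ∈ cent L ↔ ∀ y ∈ ginf L, ⁅x, y⁆ = 0 := Iff.rfl

lemma ginf_lie_cent {a : L} (ha : a ∈ ginf L) (z : cent L) : ⁅a, (z : L)⁆ = 0 := by
  rw [← lie_skew, z.2 a ha, neg_zero]

variable (L)

attribute [local instance 100] LieRing.ofAssociativeRing

/-- The action of `L ⧸ ginf L` on `cent L`. -/
noncomputable def qact : (L ⧸ ginf L) →ₗ[ℝ] Module.End ℝ (cent L) :=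
  Submodule.liftQ (ginf L).toSubmodule (LieModule.toEnd ℝ L (cent L)).toLinearMap
    (by
      intro a ha
      simp only [LinearMap.mem_ker]
      ext z
      show ⁅a, (z : L)⁆ = (0 : L)
      exact ginf_lie_cent ha z)

variable {L}

lemma qact_mk (x : L) (z : cent L) :
    qact L (LieSubmodule.Quotient.mk' (ginf L) x) z = ⁅x, z⁆ :=
  rfl

noncomputable instance : LieRingModule (L ⧸ ginf L) (cent L) where
  bracket u z := qact L u z
  add_lie u v z := by show qact L (u + v) z = qact L u z + qact L v z; rw [map_add]; rfl
  lie_add u z w := (qact L u).map_add z w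
  leibniz_lie u v z := by
    obtain ⟨x, rfl⟩ := LieSubmodule.Quotient.surjective_mk' (ginf L) u
    obtain ⟨y, rfl⟩ := LieSubmodule.Quotient.surjective_mk' (ginf L) v
    have hb : (⁅LieSubmodule.Quotient.mk' (ginf L) x,
        LieSubmodule.Quotient.mk' (ginf L) y⁆ : L ⧸ ginf L) =
        LieSubmodule.Quotient.mk' (ginf L) ⁅x, y⁆ := rfl
    show qact L _ (qact L _ z) = qact L ⁅_, _⁆ z + qact L _ (qact L _ z)
    rw [hb]
    simp only [qact_mk]
    exact leibniz_lie x y z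

lemma quot_bracket_mk (x : L) (z : cent L) :
    (⁅(LieSubmodule.Quotient.mk' (ginf L) x : L ⧸ ginf L), z⁆ : cent L) = ⁅x, z⁆ :=
  rfl

noncomputable instance : LieModule ℝ (L ⧸ ginf L) (cent L) where
  smul_lie c u z := by show qact L (c • u) z = c • qact L u z; rw [map_smul]; rfl
  lie_smul c u z := (qact L u).map_smul c z

variable (L) in
lemma exists_lcs_eq_ginf [Module.Finite ℝ L] :
    ∃ N, LieModule.lowerCentralSeries ℝ L L N = ginf L := by
  have hanti : ∀ i j, i ≤ j →
      LieModule.lowerCentralSeries ℝ L L j ≤ LieModule.lowerCentralSeries ℝ L L i :=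
    fun i j h => LieModule.antitone_lowerCentralSeries ℝ L L h
  obtain ⟨N, hN⟩ := IsArtinian.monotone_stabilizes
    (⟨fun k => ((LieModule.lowerCentralSeries ℝ L L k : LieSubmodule ℝ L L) : Submodule ℝ L),
      fun i j h => by exact hanti i j h⟩ : ℕ →o (Submodule ℝ L)ᵒᵈ)
  refine ⟨N, le_antisymm (le_iInf fun k => ?_) (iInf_le _ N)⟩
  rcases le_total k N with h | h
  · exact hanti k N h
  · exact le_of_eq ((LieSubmodule.toSubmodule_inj _ _).mp (hN k h))

instance nilpQuot [Module.Finite ℝ L] : LieRing.IsNilpotent (L ⧸ ginf L) := by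
  obtain ⟨N, hN⟩ := exists_lcs_eq_ginf L
  have h1 : LieModule.IsNilpotent L (L ⧸ ginf L) :=
    (LieModule.isNilpotent_quotient_iff ℝ L L (ginf L)).mpr ⟨N, hN.le⟩
  rw [LieModule.isNilpotent_iff ℝ L] at h1
  obtain ⟨k, hk⟩ := h1
  rw [LieRing.IsNilpotent, LieModule.isNilpotent_iff ℝ]
  refine ⟨k, ?_⟩
  rw [← LieSubmodule.toSubmodule_inj, ← coe_lowerCentralSeries_ideal_quot_eq, hk]
  simp

variable (L) in
lemma ws_zero [Module.Finite ℝ L] (hcenter : LieAlgebra.center ℝ L = ⊥) :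
    genWeightSpace (cent L) (0 : (L ⧸ ginf L) → ℝ) = ⊥ := by
  rw [← iSup_ucs_eq_genWeightSpace_zero]
  have h : ∀ k, (⊥ : LieSubmodule ℝ (L ⧸ ginf L) (cent L)).ucs k = ⊥ := by
    intro k
    induction k with
    | zero => rfl
    | succ k ih =>
      rw [LieSubmodule.ucs_succ, ih]
      ext z
      simp only [LieSubmodule.mem_normalizer, LieSubmodule.mem_bot]
      constructor
      · intro h
        have hz : (z : L) ∈ LieAlgebra.center ℝ L := by
          intro x
          have := h (LieSubmodule.Quotient.mk' (ginf L) x)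
          rw [quot_bracket_mk] at this
          exact congrArg Subtype.val this
        rw [hcenter, LieSubmodule.mem_bot] at hz
        exact Subtype.ext hz
      · rintro rfl
        intro x
        exact lie_zero x
  simp [h]

variable (L) in
lemma bridge [Module.Finite ℝ L] : ∀ k (z : cent L),
    z ∈ LieModule.lowerCentralSeries ℝ (L ⧸ ginf L) (cent L) k →
      (z : L) ∈ LieModule.lowerCentralSeries ℝ L L k := by
  intro k
  induction k with
  | zero => exact fun z _ => LieSubmodule.mem_top _
  | succ k ih =>
    intro z hz
    rw [LieModule.lowerCentralSeries_succ, ← LieSubmodule.mem_toSubmodule,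
      LieSubmodule.lieIdeal_oper_eq_linear_span'] at hz
    refine Submodule.span_induction ?_ ?_ ?_ ?_ hz
    · rintro m ⟨u, -, n, hn, rfl⟩
      obtain ⟨x, rfl⟩ := LieSubmodule.Quotient.surjective_mk' (ginf L) u
      rw [quot_bracket_mk, LieModule.lowerCentralSeries_succ]
      exact LieSubmodule.lie_mem_lie (LieSubmodule.mem_top x) (ih n hn)
    · simp
    · intro a b _ _ ha hb
      simpa using (LieModule.lowerCentralSeries ℝ L L (k+1)).add_mem ha hb
    · intro c a _ ha
      simpa using (LieModule.lowerCentralSeries ℝ L L (k+1)).smul_mem c ha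

end Setup

/-- If a finite-dimensional real Lie algebra `𝔤` has trivial centre and the ideal
`𝔤^∞ := ⋂_{j≥1} 𝔤^j` is abelian, then the centralizer of `𝔤^∞` in `𝔤` equals `𝔤^∞`. -/
theorem stmt4 (L : Type*) [LieRing L] [LieAlgebra ℝ L] [Module.Finite ℝ L]
    (hcenter : LieAlgebra.center ℝ L = ⊥)
    (habelian : ∀ x ∈ (⨅ k, LieModule.lowerCentralSeries ℝ L L k),
      ∀ y ∈ (⨅ k, LieModule.lowerCentralSeries ℝ L L k), ⁅x, y⁆ = 0) :
    ∀ x : L, (∀ y ∈ (⨅ k, LieModule.lowerCentralSeries ℝ L L k), ⁅x, y⁆ = 0) ↔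
      x ∈ (⨅ k, LieModule.lowerCentralSeries ℝ L L k) := by
  intro x
  constructor
  · intro hx
    have hIsCompl := LieModule.isCompl_genWeightSpace_zero_posFittingComp ℝ (L ⧸ ginf L) (cent L)
    rw [ws_zero L hcenter] at hIsCompl
    have htop : posFittingComp ℝ (L ⧸ ginf L) (cent L) = ⊤ := by
      have := hIsCompl.sup_eq_top
      rwa [bot_sup_eq] at this
    have hlcs : ∀ k, LieModule.lowerCentralSeries ℝ (L ⧸ ginf L) (cent L) k = ⊤ := by
      intro k
      have h := LieModule.posFittingComp_le_iInf_lowerCentralSeries ℝ (L ⧸ ginf L) (cent L)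
      rw [htop] at h
      exact le_antisymm le_top (le_trans h (iInf_le _ k))
    have hxc : x ∈ cent L := hx
    rw [LieSubmodule.mem_iInf]
    intro k
    exact bridge L k ⟨x, hxc⟩ (by rw [hlcs k]; exact LieSubmodule.mem_top _)
  · intro hx y hy
    exact habelian x hx y hy
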